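/- Let ν₁, ν₂ ≥ 2, let X₁ ⊂ ℝ^{n₁}, X₂ ⊂ ℝ^{n₂} be regular convex sets, and let fᵢ be projectively self-concordant barriers on Xᵢ with parameters γᵢ = (νᵢ−2)/√(νᵢ−1). Then f(x,y) = (ν₁f₁(x) + ν₂f₂(y))/(ν₁+ν₂) is a projectively self-concordant barrier on X₁ × X₂ with parameter γ = (ν₁+ν₂−2)/√(ν₁+ν₂−1). -/

import Mathlib

open Filter

variable {E : Type*} [NormedAddCommGroup E] [NormedSpace ℝ E]

/-- A regular convex set: closed, convex, with nonempty interior, containing no lines. -/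
def IsRegularConvex (X : Set E) : Prop :=
  IsClosed X ∧ Convex ℝ X ∧ (interior X).Nonempty ∧
    ∀ x d : E, d ≠ 0 → ¬ (∀ t : ℝ, x + t • d ∈ X)

/-- Affine metric `G(x)[h,h] = f''(x)[h,h] - (f'(x)[h])²`. -/
noncomputable def affMetric (f : E → ℝ) (x h : E) : ℝ :=
  iteratedFDeriv ℝ 2 f x (fun _ => h) - (fderiv ℝ f x h)^2

/-- Cubic form `C(x)[h,h,h]`. -/
noncomputable def cubicForm (f : E → ℝ) (x h : E) : ℝ :=
  iteratedFDeriv ℝ 3 f x (fun _ => h)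
    - 6 * iteratedFDeriv ℝ 2 f x (fun _ => h) * fderiv ℝ f x h
    + 4 * (fderiv ℝ f x h)^3

/-- Projectively self-concordant barrier with parameter γ on X. -/
def IsPSCBarrier (X : Set E) (f : E → ℝ) (γ : ℝ) : Prop :=
  ContDiffOn ℝ 3 f (interior X) ∧
  (∀ x ∈ interior X, ∀ h : E, h ≠ 0 → 0 < affMetric f x h) ∧
  (∀ x ∈ frontier X, Tendsto f (nhdsWithin x (interior X)) atTop) ∧
  (∀ x ∈ interior X, ∀ h : E, |cubicForm f x h| ≤ 2 * γ * (affMetric f x h) ^ ((3:ℝ)/2))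

/-- `σ_x(h) = inf { 1/t : t > 0, x + t•h ∈ X }`. -/
noncomputable def sigmaDist (X : Set E) (x h : E) : ℝ :=
  sInf {r : ℝ | ∃ t : ℝ, 0 < t ∧ x + t • h ∈ X ∧ r = 1/t}

/-! ### Auxiliary scalar lemmas -/

lemma rpow_three_halves {x : ℝ} (hx : 0 ≤ x) : x ^ ((3:ℝ)/2) = Real.sqrt x ^ 3 := by
  rw [Real.sqrt_eq_rpow, ← Real.rpow_natCast (x ^ ((1:ℝ)/2)) 3, ← Real.rpow_mul hx]
  norm_num

lemma sqrt_cube_superadd {A B : ℝ} (hA : 0 ≤ A) (hB : 0 ≤ B) :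
    Real.sqrt A ^ 3 + Real.sqrt B ^ 3 ≤ Real.sqrt (A + B) ^ 3 := by
  have e : ∀ x : ℝ, 0 ≤ x → Real.sqrt x ^ 3 = x * Real.sqrt x := by
    intro x hx
    rw [pow_succ, Real.sq_sqrt hx]
  rw [e A hA, e B hB, e (A+B) (by linarith)]
  have h1 : Real.sqrt A ≤ Real.sqrt (A+B) := Real.sqrt_le_sqrt (by linarith)
  have h2 : Real.sqrt B ≤ Real.sqrt (A+B) := Real.sqrt_le_sqrt (by linarith)
  nlinarith [Real.sqrt_nonneg A, Real.sqrt_nonneg B, Real.sqrt_nonneg (A+B)]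

lemma coreA (r p t q : ℝ) (hr1 : 1 ≤ r) (hp : 0 ≤ p) (ht : 0 ≤ t) (hq : 0 ≤ q)
    (hq2 : q^2 = (r^2+1)*(p^2+t^2)) :
    (r^2+1) * ((r^2-1)*p^3 + 3*r*t*p^2 + r*t^3) ≤ r*q^3 := by
  have hr0 : 0 < r := lt_of_lt_of_le one_pos hr1
  have hr21 : 1 ≤ r^2 := by nlinarith
  have hQ : 0 ≤ r^2*(t^4+3*p^2*t^2+3*p^4) + 2*p*t*r*(t^2+2*p^2) - p^4 := by
    nlinarith [mul_nonneg (sub_nonneg.2 hr21) (show (0:ℝ) ≤ t^4+3*p^2*t^2+3*p^4 by positivity),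
      mul_nonneg (mul_nonneg (mul_nonneg hp ht) hr0.le) (show (0:ℝ) ≤ t^2+2*p^2 by positivity),
      sq_nonneg p, sq_nonneg t, sq_nonneg (p*t)]
  have hD : ((r^2-1)*p^3 + 3*r*t*p^2 + r*t^3)^2 ≤ r^2*(r^2+1)*(p^2+t^2)^3 := by
    nlinarith [mul_nonneg (sq_nonneg (p - r*t)) hQ]
  have hL : 0 ≤ (r^2-1)*p^3 + 3*r*t*p^2 + r*t^3 := by
    have h1 : 0 ≤ (r^2-1)*p^3 := mul_nonneg (by linarith) (by positivity)
    have h2 : 0 ≤ 3*r*t*p^2 := by positivity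
    have h3 : 0 ≤ r*t^3 := by positivity
    linarith
  have hsq : ((r^2+1) * ((r^2-1)*p^3 + 3*r*t*p^2 + r*t^3))^2 ≤ (r*q^3)^2 := by
    have h2 := mul_le_mul_of_nonneg_left hD (show (0:ℝ) ≤ (r^2+1)^2 by positivity)
    calc ((r^2+1) * ((r^2-1)*p^3 + 3*r*t*p^2 + r*t^3))^2
        = (r^2+1)^2 * ((r^2-1)*p^3 + 3*r*t*p^2 + r*t^3)^2 := by ring
      _ ≤ (r^2+1)^2 * (r^2*(r^2+1)*(p^2+t^2)^3) := h2
      _ = (r*q^3)^2 := by rw [show (r*q^3)^2 = r^2*(q^2)^3 from by ring, hq2]; ring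
  have h1 : (0:ℝ) ≤ (r^2+1) * ((r^2-1)*p^3 + 3*r*t*p^2 + r*t^3) := mul_nonneg (by positivity) hL
  have h2 : (0:ℝ) ≤ r*q^3 := by positivity
  have := Real.sqrt_le_sqrt hsq
  rwa [Real.sqrt_sq h1, Real.sqrt_sq h2] at this

set_option maxHeartbeats 1000000 in
lemma lemA {ν G C : ℝ} (s : ℝ) (hν : 2 ≤ ν) (hG : 0 ≤ G)
    (hC : |C| ≤ 2 * ((ν - 2)/Real.sqrt (ν - 1)) * Real.sqrt G ^ 3) :
    ν * |C - 6*s*G - 2*s^3| ≤ 2 * Real.sqrt (ν*(G+s^2)) ^ 3 := by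
  have hr2 : Real.sqrt (ν - 1)^2 = ν - 1 := Real.sq_sqrt (by linarith)
  have hr1 : 1 ≤ Real.sqrt (ν - 1) := by
    nlinarith [hr2, Real.sqrt_nonneg (ν - 1)]
  have hr0 : 0 < Real.sqrt (ν - 1) := lt_of_lt_of_le one_pos hr1
  have hp : 0 ≤ Real.sqrt G := Real.sqrt_nonneg _
  have hp2 : Real.sqrt G^2 = G := Real.sq_sqrt hG
  have ht : 0 ≤ |s| := abs_nonneg _
  have ht2 : |s|^2 = s^2 := sq_abs s
  have hq : 0 ≤ Real.sqrt (ν*(G+s^2)) := Real.sqrt_nonneg _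
  have hq2 : Real.sqrt (ν*(G+s^2))^2 = ν*(G+s^2) := Real.sq_sqrt (by positivity)
  have hq2' : Real.sqrt (ν*(G+s^2))^2
      = (Real.sqrt (ν - 1)^2+1)*(Real.sqrt G^2+|s|^2) := by
    rw [hq2, hr2, hp2, ht2]; ring
  have key := coreA (Real.sqrt (ν - 1)) (Real.sqrt G) |s| (Real.sqrt (ν*(G+s^2)))
    hr1 hp ht hq hq2'
  have hC' : |C| ≤ 2*((Real.sqrt (ν-1)^2-1)/Real.sqrt (ν-1))*Real.sqrt G^3 := by
    rw [hr2, show ν - 1 - 1 = ν - 2 from by ring]; exact hC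
  have hCab := abs_le.1 hC'
  have hs1 : s ≤ |s| := le_abs_self s
  have hs2 : -s ≤ |s| := neg_le_abs s
  have hs3 : s^3 ≤ |s|^3 := by
    calc s^3 ≤ |s^3| := le_abs_self _
      _ = |s|^3 := by rw [abs_pow]
  have hs4 : -(s^3) ≤ |s|^3 := by
    calc -(s^3) ≤ |s^3| := neg_le_abs _
      _ = |s|^3 := by rw [abs_pow]
  have hsG : s*G ≤ (G * |s|) := by nlinarith [mul_le_mul_of_nonneg_right hs1 hG]
  have hsG2 : -(s*G) ≤ (G * |s|) := by nlinarith [mul_le_mul_of_nonneg_right hs2 hG]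
  have habs : |C - 6*s*G - 2*s^3|
      ≤ 2*((Real.sqrt (ν-1)^2-1)/Real.sqrt (ν-1))*Real.sqrt G^3 + 6*(G * |s|) + 2*|s|^3 := by
    rw [abs_le]
    constructor
    · nlinarith [hCab.1, hsG, hs3]
    · nlinarith [hCab.2, hsG2, hs4]
  have hmul := mul_le_mul_of_nonneg_left habs (show (0:ℝ) ≤ ν by linarith)
  have heq : ν * (2*((Real.sqrt (ν-1)^2-1)/Real.sqrt (ν-1))*Real.sqrt G^3 + 6*(G * |s|) + 2*|s|^3)
      = 2*((Real.sqrt (ν-1)^2+1) * ((Real.sqrt (ν-1)^2-1)*Real.sqrt G^3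
          + 3*Real.sqrt (ν-1) * (|s|) * Real.sqrt G^2 + Real.sqrt (ν-1)*|s|^3))/Real.sqrt (ν-1) := by
    rw [hp2, hr2]
    have hne : Real.sqrt (ν - 1) ≠ 0 := ne_of_gt hr0
    field_simp
    ring
  calc ν * |C - 6*s*G - 2*s^3|
      ≤ ν * (2*((Real.sqrt (ν-1)^2-1)/Real.sqrt (ν-1))*Real.sqrt G^3 + 6*(G * |s|) + 2*|s|^3) := hmul
    _ = 2*((Real.sqrt (ν-1)^2+1) * ((Real.sqrt (ν-1)^2-1)*Real.sqrt G^3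
          + 3*Real.sqrt (ν-1) * (|s|) * Real.sqrt G^2 + Real.sqrt (ν-1)*|s|^3))/Real.sqrt (ν-1) := heq
    _ ≤ 2 * Real.sqrt (ν*(G+s^2)) ^ 3 := by
        rw [div_le_iff₀ hr0]; nlinarith [key]

set_option maxHeartbeats 1000000 in
lemma lemB {ν G C : ℝ} (hν : 2 ≤ ν) (hG : 0 ≤ G)
    (h : ∀ s : ℝ, ν * |C - 6*s*G - 2*s^3| ≤ 2 * Real.sqrt (ν*(G+s^2)) ^ 3) :
    |C| ≤ 2 * ((ν - 2)/Real.sqrt (ν - 1)) * Real.sqrt G ^ 3 := by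
  have hr2 : Real.sqrt (ν - 1)^2 = ν - 1 := Real.sq_sqrt (by linarith)
  have hr1 : 1 ≤ Real.sqrt (ν - 1) := by nlinarith [Real.sqrt_nonneg (ν - 1)]
  have hr0 : 0 < Real.sqrt (ν - 1) := lt_of_lt_of_le one_pos hr1
  have hp : 0 ≤ Real.sqrt G := Real.sqrt_nonneg _
  have hp2 : Real.sqrt G^2 = G := Real.sq_sqrt hG
  have hν0 : 0 < ν := by linarith
  generalize hrr : Real.sqrt (ν - 1) = r at *
  generalize hpp : Real.sqrt G = p at *
  have hνr : ν = r^2+1 := by linarith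
  set s₀ : ℝ := p / r with hs₀def
  have hs₀ : r * s₀ = p := by rw [hs₀def]; field_simp
  have hEeq : ν*(G+s₀^2) = ((r^2+1)*p/r)^2 := by
    rw [hνr, ← hp2, hs₀def]; field_simp
  have hsqrtE : Real.sqrt (ν*(G+s₀^2)) = (r^2+1)*p/r := by
    rw [hEeq, Real.sqrt_sq (by positivity)]
  have h1 := h s₀
  have h2 := h (-s₀)
  rw [hsqrtE] at h1
  rw [show ν*(G+(-s₀)^2) = ν*(G+s₀^2) from by ring, hsqrtE] at h2
  have hb1 : |ν * (C - 6*s₀*G - 2*s₀^3)| ≤ 2 * ((r^2+1)*p/r)^3 := by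
    rw [abs_mul, abs_of_pos hν0]; exact h1
  have hb2 : |ν * (C - 6*(-s₀)*G - 2*(-s₀)^3)| ≤ 2 * ((r^2+1)*p/r)^3 := by
    rw [abs_mul, abs_of_pos hν0]; exact h2
  have hb1' := (abs_le.1 hb1).1
  have hb2' := (abs_le.1 hb2).2
  have hr3 : (0:ℝ) < r^3 := by positivity
  have hB : 2 * ((r^2+1)*p/r)^3 * r^3 = 2*(r^2+1)^3*p^3 := by
    field_simp
  have e1 : s₀^3 * r^3 = p^3 := by
    rw [show s₀^3*r^3 = (r*s₀)^3 from by ring, hs₀]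
  have e2 : s₀ * r^3 * G = r^2 * p^3 := by
    rw [← hp2, show s₀*r^3*(p^2) = (r*s₀)*(r^2*p^2) from by ring, hs₀]; ring
  have eR1 : ν * (C - 6*s₀*G - 2*s₀^3) * r^3
      = (r^2+1)*(C*r^3) - 6*(r^2+1)*(s₀*r^3*G) - 2*(r^2+1)*(s₀^3*r^3) := by
    rw [hνr]; ring
  have hm1 := mul_le_mul_of_nonneg_right hb1' hr3.le
  rw [eR1, e1, e2] at hm1
  have hBneg : -(2 * ((r^2+1)*p/r)^3) * r^3 = -(2*(r^2+1)^3*p^3) := by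
    rw [show -(2 * ((r^2+1)*p/r)^3) * r^3 = -(2 * ((r^2+1)*p/r)^3 * r^3) from by ring, hB]
  rw [hBneg] at hm1
  have eR2 : ν * (C - 6*(-s₀)*G - 2*(-s₀)^3) * r^3
      = (r^2+1)*(C*r^3) + 6*(r^2+1)*(s₀*r^3*G) + 2*(r^2+1)*(s₀^3*r^3) := by
    rw [hνr]; ring
  have hm2 := mul_le_mul_of_nonneg_right hb2' hr3.le
  rw [eR2, e1, e2, hB] at hm2
  have hrpos : (0:ℝ) < r^2*(r^2+1) := by positivity
  have hupper : C*r ≤ 2*(r^2-1)*p^3 := by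
    have hfin : (C*r)*(r^2*(r^2+1)) ≤ (2*(r^2-1)*p^3)*(r^2*(r^2+1)) := by nlinarith [hm2]
    exact le_of_mul_le_mul_right hfin hrpos
  have hlower : -(2*(r^2-1)*p^3) ≤ C*r := by
    have hfin : (-(2*(r^2-1)*p^3))*(r^2*(r^2+1)) ≤ (C*r)*(r^2*(r^2+1)) := by nlinarith [hm1]
    exact le_of_mul_le_mul_right hfin hrpos
  rw [show ν - 2 = r^2 - 1 from by linarith,
    show 2*((r^2-1)/r)*p^3 = (2*(r^2-1)*p^3)/r from by ring, abs_le]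
  constructor
  · rw [show -((2*(r^2-1)*p^3)/r) = (-(2*(r^2-1)*p^3))/r from by ring, div_le_iff₀ hr0]
    linarith
  · rw [le_div_iff₀ hr0]
    linarith

/-- nonnegativity of the combined affine metric (scalar form). -/
lemma nonnegG {ν₁ ν₂ S1 S2 a1 a2 : ℝ} (h1 : 0 < ν₁) (h2 : 0 < ν₂)
    (hA : 0 ≤ S1 - a1^2) (hB : 0 ≤ S2 - a2^2) :
    0 ≤ ν₁/(ν₁+ν₂) * S1 + ν₂/(ν₁+ν₂) * S2 - (ν₁/(ν₁+ν₂)*a1 + ν₂/(ν₁+ν₂)*a2)^2 := by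
  have hν : (0:ℝ) < ν₁+ν₂ := by linarith
  have key : (ν₁/(ν₁+ν₂) * S1 + ν₂/(ν₁+ν₂) * S2
        - (ν₁/(ν₁+ν₂)*a1 + ν₂/(ν₁+ν₂)*a2)^2) * (ν₁+ν₂)^2
      = (ν₁+ν₂)*ν₁*(S1-a1^2) + (ν₁+ν₂)*ν₂*(S2-a2^2) + ν₁*ν₂*(a1-a2)^2 := by
    field_simp
    ring
  nlinarith [key, mul_nonneg (mul_pos hν h1).le hA, mul_nonneg (mul_pos hν h2).le hB,
    mul_nonneg (mul_pos h1 h2).le (sq_nonneg (a1-a2)), mul_pos hν hν, sq_nonneg (ν₁+ν₂)]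

/-- positivity of the combined affine metric (scalar form). -/
lemma posG {ν₁ ν₂ S1 S2 a1 a2 : ℝ} (h1 : 0 < ν₁) (h2 : 0 < ν₂)
    (hA : 0 ≤ S1 - a1^2) (hB : 0 ≤ S2 - a2^2)
    (hst : 0 < S1 - a1^2 ∨ 0 < S2 - a2^2) :
    0 < ν₁/(ν₁+ν₂) * S1 + ν₂/(ν₁+ν₂) * S2 - (ν₁/(ν₁+ν₂)*a1 + ν₂/(ν₁+ν₂)*a2)^2 := by
  have hν : (0:ℝ) < ν₁+ν₂ := by linarith
  have key : (ν₁/(ν₁+ν₂) * S1 + ν₂/(ν₁+ν₂) * S2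
        - (ν₁/(ν₁+ν₂)*a1 + ν₂/(ν₁+ν₂)*a2)^2) * (ν₁+ν₂)^2
      = (ν₁+ν₂)*ν₁*(S1-a1^2) + (ν₁+ν₂)*ν₂*(S2-a2^2) + ν₁*ν₂*(a1-a2)^2 := by
    field_simp
    ring
  rcases hst with hst | hst
  · nlinarith [key, mul_pos (mul_pos hν h1) hst, mul_nonneg (mul_pos hν h2).le hB,
      mul_nonneg (mul_pos h1 h2).le (sq_nonneg (a1-a2)), mul_pos hν hν, sq_nonneg (ν₁+ν₂)]
  · nlinarith [key, mul_nonneg (mul_pos hν h1).le hA, mul_pos (mul_pos hν h2) hst,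
      mul_nonneg (mul_pos h1 h2).le (sq_nonneg (a1-a2)), mul_pos hν hν, sq_nonneg (ν₁+ν₂)]

set_option maxHeartbeats 2000000 in
/-- the key combination inequality, in scalar form. -/
lemma combKey {ν₁ ν₂ a1 a2 S1 S2 T1 T2 : ℝ} (hν₁ : 2 ≤ ν₁) (hν₂ : 2 ≤ ν₂)
    (hG1 : 0 ≤ S1 - a1^2) (hG2 : 0 ≤ S2 - a2^2)
    (hC1 : |T1 - 6*S1*a1 + 4*a1^3|
      ≤ 2*((ν₁-2)/Real.sqrt (ν₁-1)) * Real.sqrt (S1-a1^2)^3)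
    (hC2 : |T2 - 6*S2*a2 + 4*a2^3|
      ≤ 2*((ν₂-2)/Real.sqrt (ν₂-1)) * Real.sqrt (S2-a2^2)^3) :
    |(ν₁/(ν₁+ν₂)*T1 + ν₂/(ν₁+ν₂)*T2)
        - 6*(ν₁/(ν₁+ν₂)*S1 + ν₂/(ν₁+ν₂)*S2)*(ν₁/(ν₁+ν₂)*a1 + ν₂/(ν₁+ν₂)*a2)
        + 4*(ν₁/(ν₁+ν₂)*a1 + ν₂/(ν₁+ν₂)*a2)^3|
      ≤ 2*((ν₁+ν₂-2)/Real.sqrt (ν₁+ν₂-1))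
        * Real.sqrt ((ν₁/(ν₁+ν₂)*S1 + ν₂/(ν₁+ν₂)*S2)
            - (ν₁/(ν₁+ν₂)*a1 + ν₂/(ν₁+ν₂)*a2)^2)^3 := by
  have hν₁0 : (0:ℝ) < ν₁ := by linarith
  have hν₂0 : (0:ℝ) < ν₂ := by linarith
  have hν : (2:ℝ) ≤ ν₁+ν₂ := by linarith
  have hν0 : (0:ℝ) < ν₁+ν₂ := by linarith
  have hνne : (ν₁+ν₂ : ℝ) ≠ 0 := ne_of_gt hν0
  have hGcomb : 0 ≤ (ν₁/(ν₁+ν₂)*S1 + ν₂/(ν₁+ν₂)*S2)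
      - (ν₁/(ν₁+ν₂)*a1 + ν₂/(ν₁+ν₂)*a2)^2 := nonnegG hν₁0 hν₂0 hG1 hG2
  apply lemB hν hGcomb
  intro s
  have id1 : (ν₁+ν₂) * (((ν₁/(ν₁+ν₂)*T1 + ν₂/(ν₁+ν₂)*T2)
        - 6*(ν₁/(ν₁+ν₂)*S1 + ν₂/(ν₁+ν₂)*S2)*(ν₁/(ν₁+ν₂)*a1 + ν₂/(ν₁+ν₂)*a2)
        + 4*(ν₁/(ν₁+ν₂)*a1 + ν₂/(ν₁+ν₂)*a2)^3)
        - 6*s*((ν₁/(ν₁+ν₂)*S1 + ν₂/(ν₁+ν₂)*S2)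
            - (ν₁/(ν₁+ν₂)*a1 + ν₂/(ν₁+ν₂)*a2)^2) - 2*s^3)
      = ν₁*((T1 - 6*S1*a1 + 4*a1^3)
          - 6*(s + (ν₁/(ν₁+ν₂)*a1 + ν₂/(ν₁+ν₂)*a2) - a1)*(S1-a1^2)
          - 2*(s + (ν₁/(ν₁+ν₂)*a1 + ν₂/(ν₁+ν₂)*a2) - a1)^3)
      + ν₂*((T2 - 6*S2*a2 + 4*a2^3)
          - 6*(s + (ν₁/(ν₁+ν₂)*a1 + ν₂/(ν₁+ν₂)*a2) - a2)*(S2-a2^2)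
          - 2*(s + (ν₁/(ν₁+ν₂)*a1 + ν₂/(ν₁+ν₂)*a2) - a2)^3) := by
    field_simp
    ring
  have id2 : (ν₁+ν₂) * (((ν₁/(ν₁+ν₂)*S1 + ν₂/(ν₁+ν₂)*S2)
        - (ν₁/(ν₁+ν₂)*a1 + ν₂/(ν₁+ν₂)*a2)^2) + s^2)
      = ν₁*((S1-a1^2) + (s + (ν₁/(ν₁+ν₂)*a1 + ν₂/(ν₁+ν₂)*a2) - a1)^2)
      + ν₂*((S2-a2^2) + (s + (ν₁/(ν₁+ν₂)*a1 + ν₂/(ν₁+ν₂)*a2) - a2)^2) := by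
    field_simp
    ring
  have hA1 := lemA (s + (ν₁/(ν₁+ν₂)*a1 + ν₂/(ν₁+ν₂)*a2) - a1) hν₁ hG1 hC1
  have hA2 := lemA (s + (ν₁/(ν₁+ν₂)*a1 + ν₂/(ν₁+ν₂)*a2) - a2) hν₂ hG2 hC2
  have hP1 : (0:ℝ) ≤ ν₁*((S1-a1^2) + (s + (ν₁/(ν₁+ν₂)*a1 + ν₂/(ν₁+ν₂)*a2) - a1)^2) := by
    have := sq_nonneg (s + (ν₁/(ν₁+ν₂)*a1 + ν₂/(ν₁+ν₂)*a2) - a1)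
    nlinarith
  have hP2 : (0:ℝ) ≤ ν₂*((S2-a2^2) + (s + (ν₁/(ν₁+ν₂)*a1 + ν₂/(ν₁+ν₂)*a2) - a2)^2) := by
    have := sq_nonneg (s + (ν₁/(ν₁+ν₂)*a1 + ν₂/(ν₁+ν₂)*a2) - a2)
    nlinarith
  have hsup := sqrt_cube_superadd hP1 hP2
  calc (ν₁+ν₂) * |(ν₁/(ν₁+ν₂)*T1 + ν₂/(ν₁+ν₂)*T2)
        - 6*(ν₁/(ν₁+ν₂)*S1 + ν₂/(ν₁+ν₂)*S2)*(ν₁/(ν₁+ν₂)*a1 + ν₂/(ν₁+ν₂)*a2)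
        + 4*(ν₁/(ν₁+ν₂)*a1 + ν₂/(ν₁+ν₂)*a2)^3
        - 6*s*((ν₁/(ν₁+ν₂)*S1 + ν₂/(ν₁+ν₂)*S2)
            - (ν₁/(ν₁+ν₂)*a1 + ν₂/(ν₁+ν₂)*a2)^2) - 2*s^3|
      = |ν₁*((T1 - 6*S1*a1 + 4*a1^3)
          - 6*(s + (ν₁/(ν₁+ν₂)*a1 + ν₂/(ν₁+ν₂)*a2) - a1)*(S1-a1^2)
          - 2*(s + (ν₁/(ν₁+ν₂)*a1 + ν₂/(ν₁+ν₂)*a2) - a1)^3)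
        + ν₂*((T2 - 6*S2*a2 + 4*a2^3)
          - 6*(s + (ν₁/(ν₁+ν₂)*a1 + ν₂/(ν₁+ν₂)*a2) - a2)*(S2-a2^2)
          - 2*(s + (ν₁/(ν₁+ν₂)*a1 + ν₂/(ν₁+ν₂)*a2) - a2)^3)| := by
        rw [← id1, abs_mul, abs_of_pos hν0]
    _ ≤ ν₁*|(T1 - 6*S1*a1 + 4*a1^3)
          - 6*(s + (ν₁/(ν₁+ν₂)*a1 + ν₂/(ν₁+ν₂)*a2) - a1)*(S1-a1^2)
          - 2*(s + (ν₁/(ν₁+ν₂)*a1 + ν₂/(ν₁+ν₂)*a2) - a1)^3|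
        + ν₂*|(T2 - 6*S2*a2 + 4*a2^3)
          - 6*(s + (ν₁/(ν₁+ν₂)*a1 + ν₂/(ν₁+ν₂)*a2) - a2)*(S2-a2^2)
          - 2*(s + (ν₁/(ν₁+ν₂)*a1 + ν₂/(ν₁+ν₂)*a2) - a2)^3| := by
        calc _ ≤ _ := abs_add_le _ _
        _ = _ := by rw [abs_mul, abs_mul, abs_of_pos hν₁0, abs_of_pos hν₂0]
    _ ≤ 2 * Real.sqrt (ν₁*((S1-a1^2)
            + (s + (ν₁/(ν₁+ν₂)*a1 + ν₂/(ν₁+ν₂)*a2) - a1)^2))^3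
        + 2 * Real.sqrt (ν₂*((S2-a2^2)
            + (s + (ν₁/(ν₁+ν₂)*a1 + ν₂/(ν₁+ν₂)*a2) - a2)^2))^3 := add_le_add hA1 hA2
    _ ≤ 2 * Real.sqrt ((ν₁+ν₂) * (((ν₁/(ν₁+ν₂)*S1 + ν₂/(ν₁+ν₂)*S2)
            - (ν₁/(ν₁+ν₂)*a1 + ν₂/(ν₁+ν₂)*a2)^2) + s^2))^3 := by
        rw [id2]; linarith [hsup]

/-! ### Derivative computations on products -/

section ProdCalc

variable {E₁ E₂ : Type*} [NormedAddCommGroup E₁] [NormedSpace ℝ E₁]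
  [NormedAddCommGroup E₂] [NormedSpace ℝ E₂]

lemma comp_fst_iteratedFDeriv {s₁ : Set E₁} (hs₁ : IsOpen s₁)
    {f₁ : E₁ → ℝ} {n : ℕ} (hf₁ : ContDiffOn ℝ n f₁ s₁) {z : E₁ × E₂} (hz : z.1 ∈ s₁)
    (h : E₁ × E₂) :
    iteratedFDeriv ℝ n (fun w : E₁ × E₂ => f₁ w.1) z (fun _ => h) =
      iteratedFDeriv ℝ n f₁ z.1 (fun _ => h.1) := by
  have hpre : IsOpen ((Prod.fst : E₁ × E₂ → E₁) ⁻¹' s₁) := hs₁.preimage continuous_fst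
  have hkey := (ContinuousLinearMap.fst ℝ E₁ E₂).iteratedFDerivWithin_comp_right
    hf₁ hs₁.uniqueDiffOn (by simpa using hpre.uniqueDiffOn) (x := z) hz (by exact_mod_cast le_rfl)
  have e1 : iteratedFDeriv ℝ n (fun w : E₁ × E₂ => f₁ w.1) z (fun _ => h)
      = iteratedFDerivWithin ℝ n (f₁ ∘ (ContinuousLinearMap.fst ℝ E₁ E₂))
          ((ContinuousLinearMap.fst ℝ E₁ E₂) ⁻¹' s₁) z (fun _ => h) := by
    rw [iteratedFDerivWithin_of_isOpen n (by simpa using hpre) (by simpa using hz)]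
    rfl
  rw [e1, hkey]
  simp only [ContinuousMultilinearMap.compContinuousLinearMap_apply,
    ContinuousLinearMap.coe_fst']
  rw [iteratedFDerivWithin_of_isOpen n hs₁ hz]

lemma comp_snd_iteratedFDeriv {s₂ : Set E₂} (hs₂ : IsOpen s₂)
    {f₂ : E₂ → ℝ} {n : ℕ} (hf₂ : ContDiffOn ℝ n f₂ s₂) {z : E₁ × E₂} (hz : z.2 ∈ s₂)
    (h : E₁ × E₂) :
    iteratedFDeriv ℝ n (fun w : E₁ × E₂ => f₂ w.2) z (fun _ => h) =
      iteratedFDeriv ℝ n f₂ z.2 (fun _ => h.2) := by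
  have hpre : IsOpen ((Prod.snd : E₁ × E₂ → E₂) ⁻¹' s₂) := hs₂.preimage continuous_snd
  have hkey := (ContinuousLinearMap.snd ℝ E₁ E₂).iteratedFDerivWithin_comp_right
    hf₂ hs₂.uniqueDiffOn (by simpa using hpre.uniqueDiffOn) (x := z) hz (by exact_mod_cast le_rfl)
  have e1 : iteratedFDeriv ℝ n (fun w : E₁ × E₂ => f₂ w.2) z (fun _ => h)
      = iteratedFDerivWithin ℝ n (f₂ ∘ (ContinuousLinearMap.snd ℝ E₁ E₂))
          ((ContinuousLinearMap.snd ℝ E₁ E₂) ⁻¹' s₂) z (fun _ => h) := by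
    rw [iteratedFDerivWithin_of_isOpen n (by simpa using hpre) (by simpa using hz)]
    rfl
  rw [e1, hkey]
  simp only [ContinuousMultilinearMap.compContinuousLinearMap_apply,
    ContinuousLinearMap.coe_snd']
  rw [iteratedFDerivWithin_of_isOpen n hs₂ hz]

lemma comb_iteratedFDeriv {s₁ : Set E₁} {s₂ : Set E₂} (hs₁ : IsOpen s₁) (hs₂ : IsOpen s₂)
    {f₁ : E₁ → ℝ} {f₂ : E₂ → ℝ} {n : ℕ} (hf₁ : ContDiffOn ℝ n f₁ s₁)
    (hf₂ : ContDiffOn ℝ n f₂ s₂) (c₁ c₂ : ℝ) {z : E₁ × E₂} (hz : z ∈ s₁ ×ˢ s₂)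
    (h : E₁ × E₂) :
    iteratedFDeriv ℝ n (fun w => c₁ * f₁ w.1 + c₂ * f₂ w.2) z (fun _ => h) =
      c₁ * iteratedFDeriv ℝ n f₁ z.1 (fun _ => h.1)
        + c₂ * iteratedFDeriv ℝ n f₂ z.2 (fun _ => h.2) := by
  have hU : IsOpen (s₁ ×ˢ s₂) := hs₁.prod hs₂
  have hc₁ : ContDiffOn ℝ n (fun w : E₁ × E₂ => f₁ w.1) (s₁ ×ˢ s₂) :=
    hf₁.comp contDiffOn_fst (fun w hw => hw.1)
  have hc₂ : ContDiffOn ℝ n (fun w : E₁ × E₂ => f₂ w.2) (s₁ ×ˢ s₂) :=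
    hf₂.comp contDiffOn_snd (fun w hw => hw.2)
  have hsm₁ : ContDiffOn ℝ n (fun w : E₁ × E₂ => c₁ * f₁ w.1) (s₁ ×ˢ s₂) := hc₁.const_smul c₁
  have hsm₂ : ContDiffOn ℝ n (fun w : E₁ × E₂ => c₂ * f₂ w.2) (s₁ ×ˢ s₂) := hc₂.const_smul c₂
  calc iteratedFDeriv ℝ n (fun w => c₁ * f₁ w.1 + c₂ * f₂ w.2) z (fun _ => h)
      = iteratedFDerivWithin ℝ n (fun w => c₁ * f₁ w.1 + c₂ * f₂ w.2) (s₁ ×ˢ s₂) z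
          (fun _ => h) := by rw [iteratedFDerivWithin_of_isOpen n hU hz]
    _ = iteratedFDerivWithin ℝ n (fun w : E₁ × E₂ => c₁ * f₁ w.1) (s₁ ×ˢ s₂) z (fun _ => h)
        + iteratedFDerivWithin ℝ n (fun w : E₁ × E₂ => c₂ * f₂ w.2) (s₁ ×ˢ s₂) z
          (fun _ => h) := by
        rw [iteratedFDerivWithin_add_apply' (hsm₁ z hz) (hsm₂ z hz) hU.uniqueDiffOn hz]
        rfl
    _ = c₁ * iteratedFDerivWithin ℝ n (fun w : E₁ × E₂ => f₁ w.1) (s₁ ×ˢ s₂) z (fun _ => h)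
        + c₂ * iteratedFDerivWithin ℝ n (fun w : E₁ × E₂ => f₂ w.2) (s₁ ×ˢ s₂) z
          (fun _ => h) := by
        rw [show (fun w : E₁ × E₂ => c₁ * f₁ w.1) = c₁ • (fun w : E₁ × E₂ => f₁ w.1) from rfl,
          show (fun w : E₁ × E₂ => c₂ * f₂ w.2) = c₂ • (fun w : E₁ × E₂ => f₂ w.2) from rfl,
          iteratedFDerivWithin_const_smul_apply (hc₁ z hz) hU.uniqueDiffOn hz,
          iteratedFDerivWithin_const_smul_apply (hc₂ z hz) hU.uniqueDiffOn hz]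
        rfl
    _ = c₁ * iteratedFDeriv ℝ n f₁ z.1 (fun _ => h.1)
        + c₂ * iteratedFDeriv ℝ n f₂ z.2 (fun _ => h.2) := by
        rw [iteratedFDerivWithin_of_isOpen n hU hz, iteratedFDerivWithin_of_isOpen n hU hz,
          comp_fst_iteratedFDeriv hs₁ hf₁ hz.1 h, comp_snd_iteratedFDeriv hs₂ hf₂ hz.2 h]

lemma comb_fderiv {s₁ : Set E₁} {s₂ : Set E₂} (hs₁ : IsOpen s₁) (hs₂ : IsOpen s₂)
    {f₁ : E₁ → ℝ} {f₂ : E₂ → ℝ} (hf₁ : ContDiffOn ℝ 1 f₁ s₁)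
    (hf₂ : ContDiffOn ℝ 1 f₂ s₂) (c₁ c₂ : ℝ) {z : E₁ × E₂} (hz : z ∈ s₁ ×ˢ s₂)
    (h : E₁ × E₂) :
    fderiv ℝ (fun w => c₁ * f₁ w.1 + c₂ * f₂ w.2) z h =
      c₁ * fderiv ℝ f₁ z.1 h.1 + c₂ * fderiv ℝ f₂ z.2 h.2 := by
  have := comb_iteratedFDeriv hs₁ hs₂ (n := 1) hf₁ hf₂ c₁ c₂ hz h
  simpa [iteratedFDeriv_one_apply] using this

end ProdCalc

lemma affMetric_zero (f : E → ℝ) (x : E) : affMetric f x 0 = 0 := by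
  unfold affMetric
  rw [ContinuousMultilinearMap.map_coord_zero _ (0 : Fin 2) rfl, map_zero]
  norm_num

lemma cubicForm_zero (f : E → ℝ) (x : E) : cubicForm f x 0 = 0 := by
  unfold cubicForm
  rw [ContinuousMultilinearMap.map_coord_zero _ (0 : Fin 3) rfl,
    ContinuousMultilinearMap.map_coord_zero _ (0 : Fin 2) rfl, map_zero]
  norm_num

/-- local lower bound near a point of the closure, for a barrier. -/
lemma eventually_lb {X : Set E} {f : E → ℝ}
    (hsmooth : ContDiffOn ℝ 3 f (interior X))
    (hbar : ∀ x ∈ frontier X, Tendsto f (nhdsWithin x (interior X)) atTop)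
    {x : E} (hx : x ∈ closure X) :
    ∃ c : ℝ, ∀ᶠ w in nhdsWithin x (interior X), c ≤ f w := by
  rw [closure_eq_interior_union_frontier] at hx
  rcases hx with hxi | hxf
  · refine ⟨f x - 1, ?_⟩
    have hcont : ContinuousAt f x :=
      hsmooth.continuousOn.continuousAt (isOpen_interior.mem_nhds hxi)
    have ht : Tendsto f (nhdsWithin x (interior X)) (nhds (f x)) :=
      hcont.tendsto.mono_left nhdsWithin_le_nhds
    exact ht.eventually (eventually_ge_nhds (by linarith))
  · exact ⟨0, (hbar x hxf).eventually_ge_atTop 0⟩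

set_option maxHeartbeats 2000000 in
theorem stmt_15 {n₁ n₂ : ℕ} (ν₁ ν₂ : ℝ) (hν₁ : 2 ≤ ν₁) (hν₂ : 2 ≤ ν₂)
    (X₁ : Set (EuclideanSpace ℝ (Fin n₁))) (X₂ : Set (EuclideanSpace ℝ (Fin n₂)))
    (hX₁ : IsRegularConvex X₁) (hX₂ : IsRegularConvex X₂)
    (f₁ : EuclideanSpace ℝ (Fin n₁) → ℝ) (f₂ : EuclideanSpace ℝ (Fin n₂) → ℝ)
    (hf₁ : IsPSCBarrier X₁ f₁ ((ν₁ - 2)/Real.sqrt (ν₁ - 1)))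
    (hf₂ : IsPSCBarrier X₂ f₂ ((ν₂ - 2)/Real.sqrt (ν₂ - 1))) :
    IsPSCBarrier (X₁ ×ˢ X₂)
      (fun z => (ν₁ * f₁ z.1 + ν₂ * f₂ z.2) / (ν₁ + ν₂))
      ((ν₁ + ν₂ - 2)/Real.sqrt (ν₁ + ν₂ - 1)) := by
  obtain ⟨hf₁s, hf₁pos, hf₁bar, hf₁sc⟩ := hf₁
  obtain ⟨hf₂s, hf₂pos, hf₂bar, hf₂sc⟩ := hf₂
  have hν₁0 : (0:ℝ) < ν₁ := by linarith
  have hν₂0 : (0:ℝ) < ν₂ := by linarith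
  have hν0 : (0:ℝ) < ν₁ + ν₂ := by linarith
  have hνne : (ν₁ + ν₂ : ℝ) ≠ 0 := ne_of_gt hν0
  have hs₁ : IsOpen (interior X₁) := isOpen_interior
  have hs₂ : IsOpen (interior X₂) := isOpen_interior
  have hd₃₁ : ContDiffOn ℝ (3:ℕ) f₁ (interior X₁) := by exact_mod_cast hf₁s
  have hd₃₂ : ContDiffOn ℝ (3:ℕ) f₂ (interior X₂) := by exact_mod_cast hf₂s
  have hd₂₁ : ContDiffOn ℝ (2:ℕ) f₁ (interior X₁) := hd₃₁.of_le (by exact_mod_cast (by norm_num : (2:ℕ) ≤ 3))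
  have hd₂₂ : ContDiffOn ℝ (2:ℕ) f₂ (interior X₂) := hd₃₂.of_le (by exact_mod_cast (by norm_num : (2:ℕ) ≤ 3))
  have hd₁₁ : ContDiffOn ℝ (1:ℕ) f₁ (interior X₁) := hd₃₁.of_le (by exact_mod_cast (by norm_num : (1:ℕ) ≤ 3))
  have hd₁₂ : ContDiffOn ℝ (1:ℕ) f₂ (interior X₂) := hd₃₂.of_le (by exact_mod_cast (by norm_num : (1:ℕ) ≤ 3))
  have hfun : (fun z : EuclideanSpace ℝ (Fin n₁) × EuclideanSpace ℝ (Fin n₂) =>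
      (ν₁ * f₁ z.1 + ν₂ * f₂ z.2) / (ν₁ + ν₂))
      = (fun z => (ν₁/(ν₁+ν₂)) * f₁ z.1 + (ν₂/(ν₁+ν₂)) * f₂ z.2) := by
    funext z
    field_simp
  rw [hfun]
  refine ⟨?_, ?_, ?_, ?_⟩
  · -- smoothness
    rw [interior_prod_eq]
    exact ((hf₁s.comp contDiffOn_fst (fun w hw => hw.1)).const_smul (ν₁/(ν₁+ν₂))).add
      ((hf₂s.comp contDiffOn_snd (fun w hw => hw.2)).const_smul (ν₂/(ν₁+ν₂)))
  · -- positivity of the affine metric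
    intro z hz h hh
    rw [interior_prod_eq] at hz
    have ha := comb_fderiv hs₁ hs₂ hd₁₁ hd₁₂ (ν₁/(ν₁+ν₂)) (ν₂/(ν₁+ν₂)) hz h
    have hS := comb_iteratedFDeriv hs₁ hs₂ (n := 2) hd₂₁ hd₂₂ (ν₁/(ν₁+ν₂)) (ν₂/(ν₁+ν₂)) hz h
    have hG1 : 0 ≤ affMetric f₁ z.1 h.1 := by
      by_cases hne : h.1 = 0
      · rw [hne, affMetric_zero]
      · exact (hf₁pos z.1 hz.1 h.1 hne).le
    have hG2 : 0 ≤ affMetric f₂ z.2 h.2 := by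
      by_cases hne : h.2 = 0
      · rw [hne, affMetric_zero]
      · exact (hf₂pos z.2 hz.2 h.2 hne).le
    have hst : 0 < affMetric f₁ z.1 h.1 ∨ 0 < affMetric f₂ z.2 h.2 := by
      rcases (show h.1 ≠ 0 ∨ h.2 ≠ 0 by
        by_contra hcon
        push_neg at hcon
        exact hh (Prod.ext hcon.1 hcon.2)) with hne | hne
      · exact Or.inl (hf₁pos z.1 hz.1 h.1 hne)
      · exact Or.inr (hf₂pos z.2 hz.2 h.2 hne)
    unfold affMetric at *
    rw [hS, ha]
    exact posG hν₁0 hν₂0 hG1 hG2 hst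
  · -- barrier property
    rintro ⟨x, y⟩ hzb
    rw [frontier_prod_eq] at hzb
    rw [interior_prod_eq, nhdsWithin_prod_eq]
    rcases hzb with hzb | hzb
    · -- x ∈ closure X₁, y ∈ frontier X₂
      obtain ⟨c, hc⟩ := eventually_lb hf₁s hf₁bar hzb.1
      have hg : Tendsto (fun w : EuclideanSpace ℝ (Fin n₁) × EuclideanSpace ℝ (Fin n₂) =>
          (ν₂/(ν₁+ν₂)) * f₂ w.2)
          ((nhdsWithin x (interior X₁)) ×ˢ (nhdsWithin y (interior X₂))) atTop :=
        ((hf₂bar y hzb.2).const_mul_atTop (by positivity)).comp tendsto_snd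
      have hfst : Tendsto (Prod.fst : EuclideanSpace ℝ (Fin n₁) × EuclideanSpace ℝ (Fin n₂)
            → EuclideanSpace ℝ (Fin n₁))
          ((nhdsWithin x (interior X₁)) ×ˢ (nhdsWithin y (interior X₂)))
          (nhdsWithin x (interior X₁)) := tendsto_fst
      have hev : ∀ᶠ w : EuclideanSpace ℝ (Fin n₁) × EuclideanSpace ℝ (Fin n₂) in
          (nhdsWithin x (interior X₁)) ×ˢ (nhdsWithin y (interior X₂)),
          (ν₁/(ν₁+ν₂)) * c ≤ (ν₁/(ν₁+ν₂)) * f₁ w.1 := by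
        filter_upwards [hfst.eventually hc] with w hw
        exact mul_le_mul_of_nonneg_left hw (by positivity)
      exact tendsto_atTop_add_left_of_le' _ ((ν₁/(ν₁+ν₂)) * c) hev hg
    · -- x ∈ frontier X₁, y ∈ closure X₂
      obtain ⟨c, hc⟩ := eventually_lb hf₂s hf₂bar hzb.2
      have hg : Tendsto (fun w : EuclideanSpace ℝ (Fin n₁) × EuclideanSpace ℝ (Fin n₂) =>
          (ν₁/(ν₁+ν₂)) * f₁ w.1)
          ((nhdsWithin x (interior X₁)) ×ˢ (nhdsWithin y (interior X₂))) atTop :=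
        ((hf₁bar x hzb.1).const_mul_atTop (by positivity)).comp tendsto_fst
      have hsnd : Tendsto (Prod.snd : EuclideanSpace ℝ (Fin n₁) × EuclideanSpace ℝ (Fin n₂)
            → EuclideanSpace ℝ (Fin n₂))
          ((nhdsWithin x (interior X₁)) ×ˢ (nhdsWithin y (interior X₂)))
          (nhdsWithin y (interior X₂)) := tendsto_snd
      have hev : ∀ᶠ w : EuclideanSpace ℝ (Fin n₁) × EuclideanSpace ℝ (Fin n₂) in
          (nhdsWithin x (interior X₁)) ×ˢ (nhdsWithin y (interior X₂)),
          (ν₂/(ν₁+ν₂)) * c ≤ (ν₂/(ν₁+ν₂)) * f₂ w.2 := by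
        filter_upwards [hsnd.eventually hc] with w hw
        exact mul_le_mul_of_nonneg_left hw (by positivity)
      exact tendsto_atTop_add_right_of_le' _ ((ν₂/(ν₁+ν₂)) * c) hg hev
  · -- self-concordance inequality
    intro z hz h
    rw [interior_prod_eq] at hz
    have ha := comb_fderiv hs₁ hs₂ hd₁₁ hd₁₂ (ν₁/(ν₁+ν₂)) (ν₂/(ν₁+ν₂)) hz h
    have hS := comb_iteratedFDeriv hs₁ hs₂ (n := 2) hd₂₁ hd₂₂ (ν₁/(ν₁+ν₂)) (ν₂/(ν₁+ν₂)) hz h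
    have hT := comb_iteratedFDeriv hs₁ hs₂ (n := 3) hd₃₁ hd₃₂ (ν₁/(ν₁+ν₂)) (ν₂/(ν₁+ν₂)) hz h
    have hG1 : 0 ≤ affMetric f₁ z.1 h.1 := by
      by_cases hne : h.1 = 0
      · rw [hne, affMetric_zero]
      · exact (hf₁pos z.1 hz.1 h.1 hne).le
    have hG2 : 0 ≤ affMetric f₂ z.2 h.2 := by
      by_cases hne : h.2 = 0
      · rw [hne, affMetric_zero]
      · exact (hf₂pos z.2 hz.2 h.2 hne).le
    have hC1 : |cubicForm f₁ z.1 h.1|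
        ≤ 2*((ν₁-2)/Real.sqrt (ν₁-1)) * Real.sqrt (affMetric f₁ z.1 h.1)^3 := by
      have := hf₁sc z.1 hz.1 h.1
      rwa [rpow_three_halves hG1] at this
    have hC2 : |cubicForm f₂ z.2 h.2|
        ≤ 2*((ν₂-2)/Real.sqrt (ν₂-1)) * Real.sqrt (affMetric f₂ z.2 h.2)^3 := by
      have := hf₂sc z.2 hz.2 h.2
      rwa [rpow_three_halves hG2] at this
    have hGcomb : 0 ≤ affMetric
        (fun z => (ν₁/(ν₁+ν₂)) * f₁ z.1 + (ν₂/(ν₁+ν₂)) * f₂ z.2) z h := by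
      unfold affMetric
      rw [hS, ha]
      unfold affMetric at hG1 hG2
      exact nonnegG hν₁0 hν₂0 hG1 hG2
    rw [rpow_three_halves hGcomb]
    unfold affMetric cubicForm at *
    rw [hS, ha, hT]
    exact combKey hν₁ hν₂ hG1 hG2 hC1 hC2
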